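/- Up to isomorphism, there are exactly 3 connected quandles of order 5, i.e. the set of right self-distributive, idempotent binary operations on a 5-element set for which every right multiplication R_x(y) = y*x is a bijection and which are connected has exactly 3 equivalence classes under shelf isomorphism. -/

import Mathlib

set_option maxRecDepth 10000
set_option maxHeartbeats 1000000

/-- A binary operation is right self-distributive (a shelf operation). -/
def RightDist {S : Type*} (op : S → S → S) : Prop :=
  ∀ x y z : S, op (op x y) z = op (op x z) (op y z)

/-- A shelf is connected if any element can be reached from any other by finitely many
right multiplications: `y = (⋯((x*x₁)*x₂)⋯)*xₘ`. -/
def ShelfConnected {S : Type*} (op : S → S → S) : Prop :=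
  ∀ x y : S, ∃ l : List S, l.foldl op x = y

/-- Two shelf operations are isomorphic if there is a bijection intertwining them. -/
def ShelfIso {S T : Type*} (op₁ : S → S → S) (op₂ : T → T → T) : Prop :=
  ∃ f : S ≃ T, ∀ x y : S, f (op₁ x y) = op₂ (f x) (f y)

/-- A rack is a shelf in which every right multiplication `R_x(y) = y*x` is a bijection. -/
def IsRackOp {S : Type*} (op : S → S → S) : Prop :=
  ∀ x : S, Function.Bijective (fun y => op y x)

namespace CQ5
def perms120 : List (Fin 5 → Fin 5) := [
  ![0,1,2,3,4],
  ![0,1,2,4,3],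
  ![0,1,3,2,4],
  ![0,1,3,4,2],
  ![0,1,4,2,3],
  ![0,1,4,3,2],
  ![0,2,1,3,4],
  ![0,2,1,4,3],
  ![0,2,3,1,4],
  ![0,2,3,4,1],
  ![0,2,4,1,3],
  ![0,2,4,3,1],
  ![0,3,1,2,4],
  ![0,3,1,4,2],
  ![0,3,2,1,4],
  ![0,3,2,4,1],
  ![0,3,4,1,2],
  ![0,3,4,2,1],
  ![0,4,1,2,3],
  ![0,4,1,3,2],
  ![0,4,2,1,3],
  ![0,4,2,3,1],
  ![0,4,3,1,2],
  ![0,4,3,2,1],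
  ![1,0,2,3,4],
  ![1,0,2,4,3],
  ![1,0,3,2,4],
  ![1,0,3,4,2],
  ![1,0,4,2,3],
  ![1,0,4,3,2],
  ![1,2,0,3,4],
  ![1,2,0,4,3],
  ![1,2,3,0,4],
  ![1,2,3,4,0],
  ![1,2,4,0,3],
  ![1,2,4,3,0],
  ![1,3,0,2,4],
  ![1,3,0,4,2],
  ![1,3,2,0,4],
  ![1,3,2,4,0],
  ![1,3,4,0,2],
  ![1,3,4,2,0],
  ![1,4,0,2,3],
  ![1,4,0,3,2],
  ![1,4,2,0,3],
  ![1,4,2,3,0],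
  ![1,4,3,0,2],
  ![1,4,3,2,0],
  ![2,0,1,3,4],
  ![2,0,1,4,3],
  ![2,0,3,1,4],
  ![2,0,3,4,1],
  ![2,0,4,1,3],
  ![2,0,4,3,1],
  ![2,1,0,3,4],
  ![2,1,0,4,3],
  ![2,1,3,0,4],
  ![2,1,3,4,0],
  ![2,1,4,0,3],
  ![2,1,4,3,0],
  ![2,3,0,1,4],
  ![2,3,0,4,1],
  ![2,3,1,0,4],
  ![2,3,1,4,0],
  ![2,3,4,0,1],
  ![2,3,4,1,0],
  ![2,4,0,1,3],
  ![2,4,0,3,1],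
  ![2,4,1,0,3],
  ![2,4,1,3,0],
  ![2,4,3,0,1],
  ![2,4,3,1,0],
  ![3,0,1,2,4],
  ![3,0,1,4,2],
  ![3,0,2,1,4],
  ![3,0,2,4,1],
  ![3,0,4,1,2],
  ![3,0,4,2,1],
  ![3,1,0,2,4],
  ![3,1,0,4,2],
  ![3,1,2,0,4],
  ![3,1,2,4,0],
  ![3,1,4,0,2],
  ![3,1,4,2,0],
  ![3,2,0,1,4],
  ![3,2,0,4,1],
  ![3,2,1,0,4],
  ![3,2,1,4,0],
  ![3,2,4,0,1],
  ![3,2,4,1,0],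
  ![3,4,0,1,2],
  ![3,4,0,2,1],
  ![3,4,1,0,2],
  ![3,4,1,2,0],
  ![3,4,2,0,1],
  ![3,4,2,1,0],
  ![4,0,1,2,3],
  ![4,0,1,3,2],
  ![4,0,2,1,3],
  ![4,0,2,3,1],
  ![4,0,3,1,2],
  ![4,0,3,2,1],
  ![4,1,0,2,3],
  ![4,1,0,3,2],
  ![4,1,2,0,3],
  ![4,1,2,3,0],
  ![4,1,3,0,2],
  ![4,1,3,2,0],
  ![4,2,0,1,3],
  ![4,2,0,3,1],
  ![4,2,1,0,3],
  ![4,2,1,3,0],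
  ![4,2,3,0,1],
  ![4,2,3,1,0],
  ![4,3,0,1,2],
  ![4,3,0,2,1],
  ![4,3,1,0,2],
  ![4,3,1,2,0],
  ![4,3,2,0,1],
  ![4,3,2,1,0]]
def subsets31 : List (List (Fin 5)) := [[0], [1], [2], [3], [4], [0,1], [0,2], [0,3], [0,4], [1,2], [1,3], [1,4], [2,3], [2,4], [3,4], [0,1,2], [0,1,3], [0,1,4], [0,2,3], [0,2,4], [0,3,4], [1,2,3], [1,2,4], [1,3,4], [2,3,4], [0,1,2,3], [0,1,2,4], [0,1,3,4], [0,2,3,4], [1,2,3,4], [0,1,2,3,4]]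
def aff2 : Fin 5 → Fin 5 → Fin 5 := fun x y => ![ ![0,4,3,2,1], ![2,1,0,4,3], ![4,3,2,1,0], ![1,0,4,3,2], ![3,2,1,0,4] ] x y
def aff3 : Fin 5 → Fin 5 → Fin 5 := fun x y => ![ ![0,3,1,4,2], ![3,1,4,2,0], ![1,4,2,0,3], ![4,2,0,3,1], ![2,0,3,1,4] ] x y
def aff4 : Fin 5 → Fin 5 → Fin 5 := fun x y => ![ ![0,2,4,1,3], ![4,1,3,0,2], ![3,0,2,4,1], ![2,4,1,3,0], ![1,3,0,2,4] ] x y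
def l5 : List (Fin 5) := [0,1,2,3,4]

def allb (p : Fin 5 → Bool) : Bool := l5.all p
def anyb (p : Fin 5 → Bool) : Bool := l5.any p

def injb (f : Fin 5 → Fin 5) : Bool :=
  allb fun x => allb fun y => !(f x == f y) || (x == y)

def mkOp (σ0 σ1 σ2 σ3 σ4 : Fin 5 → Fin 5) : Fin 5 → Fin 5 → Fin 5 :=
  fun x y => ![σ0, σ1, σ2, σ3, σ4] y x

def rdb (op : Fin 5 → Fin 5 → Fin 5) : Bool :=
  allb fun x => allb fun y => allb fun z =>
    op (op x y) z == op (op x z) (op y z)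

def dpb (op : Fin 5 → Fin 5 → Fin 5) : Bool :=
  subsets31.all fun s =>
    !(s.all fun a => l5.all fun z => s.any (fun w => w == op a z)) ||
    (l5.all fun y => s.any (fun w => w == y))

def isob (op q : Fin 5 → Fin 5 → Fin 5) : Bool :=
  perms120.any fun f => allb fun x => allb fun y => f (op x y) == q (f x) (f y)

def iso3b (op : Fin 5 → Fin 5 → Fin 5) : Bool :=
  isob op aff2 || isob op aff3 || isob op aff4

def body (c σ1 σ2 σ3 σ4 : Fin 5 → Fin 5) : Bool :=
  !(rdb (mkOp c σ1 σ2 σ3 σ4) && dpb (mkOp c σ1 σ2 σ3 σ4)) || iso3b (mkOp c σ1 σ2 σ3 σ4)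

def relb (c σa σb : Fin 5 → Fin 5) : Bool := allb fun x => σb (c x) == c (σa x)
def fixb (σ : Fin 5 → Fin 5) (i : Fin 5) : Bool := σ i == i

def c2v : Fin 5 → Fin 5 := ![0,2,1,3,4]
def c22v : Fin 5 → Fin 5 := ![0,2,1,4,3]
def c3v : Fin 5 → Fin 5 := ![0,2,3,1,4]
def c4v : Fin 5 → Fin 5 := ![0,2,3,4,1]

def searchC2b : Bool :=
  perms120.all fun σ1 => !(fixb σ1 1) ||
  (perms120.all fun σ2 => !(fixb σ2 2 && relb c2v σ1 σ2) ||
  (perms120.all fun σ3 => !(fixb σ3 3 && relb c2v σ3 σ3) ||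
  (perms120.all fun σ4 => !(fixb σ4 4 && relb c2v σ4 σ4) ||
    body c2v σ1 σ2 σ3 σ4)))

def searchC22b : Bool :=
  perms120.all fun σ1 => !(fixb σ1 1) ||
  (perms120.all fun σ2 => !(fixb σ2 2 && relb c22v σ1 σ2) ||
  (perms120.all fun σ3 => !(fixb σ3 3) ||
  (perms120.all fun σ4 => !(fixb σ4 4 && relb c22v σ3 σ4) ||
    body c22v σ1 σ2 σ3 σ4)))

def searchC3b : Bool :=
  perms120.all fun σ1 => !(fixb σ1 1) ||
  (perms120.all fun σ2 => !(fixb σ2 2 && relb c3v σ1 σ2) ||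
  (perms120.all fun σ3 => !(fixb σ3 3 && relb c3v σ2 σ3) ||
  (perms120.all fun σ4 => !(fixb σ4 4 && relb c3v σ4 σ4) ||
    body c3v σ1 σ2 σ3 σ4)))

def searchC4b : Bool :=
  perms120.all fun σ1 => !(fixb σ1 1) ||
  (perms120.all fun σ2 => !(fixb σ2 2 && relb c4v σ1 σ2) ||
  (perms120.all fun σ3 => !(fixb σ3 3 && relb c4v σ2 σ3) ||
  (perms120.all fun σ4 => !(fixb σ4 4 && relb c4v σ3 σ4) ||
    body c4v σ1 σ2 σ3 σ4)))

def idb (p : Fin 5 → Fin 5) : Bool := allb fun x => p x == x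
def conjb (g p c : Fin 5 → Fin 5) : Bool := allb fun x => g (p x) == c (g x)

def normb : Bool :=
  perms120.all fun p => l5.all fun x0 => !(p x0 == x0) ||
    (idb p ||
      perms120.any fun g => g x0 == 0 &&
        (conjb g p c2v || conjb g p c22v || conjb g p c3v || conjb g p c4v))

def mpb : Bool :=
  l5.all fun a => l5.all fun b => l5.all fun c => l5.all fun d => l5.all fun e =>
    !(injb ![a,b,c,d,e]) ||
    (perms120.any fun g => allb fun x => g x == ![a,b,c,d,e] x)

/-! ### Kernel-verified boolean computations -/

theorem searchC2 : searchC2b = true := by decide +kernel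
theorem searchC22 : searchC22b = true := by decide +kernel
theorem searchC3 : searchC3b = true := by decide +kernel
theorem searchC4 : searchC4b = true := by decide +kernel
theorem norm_ok : normb = true := by decide +kernel
theorem mp_ok : mpb = true := by decide +kernel
theorem perms_inj : perms120.all injb = true := by decide +kernel
theorem subs_ne : ∀ s ∈ subsets31, s ≠ [] := by decide
theorem niso23 : isob aff2 aff3 = false := by decide +kernel
theorem niso32 : isob aff3 aff2 = false := by decide +kernel
theorem niso24 : isob aff2 aff4 = false := by decide +kernel
theorem niso42 : isob aff4 aff2 = false := by decide +kernel
theorem niso34 : isob aff3 aff4 = false := by decide +kernel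
theorem niso43 : isob aff4 aff3 = false := by decide +kernel
def onestepb (q : Fin 5 → Fin 5 → Fin 5) : Bool :=
  allb fun x => allb fun y => anyb fun z => q x z == y
def colf (op : Fin 5 → Fin 5 → Fin 5) (z : Fin 5) : Fin 5 → Fin 5 := fun y => op y z
def rackb (q : Fin 5 → Fin 5 → Fin 5) : Bool := allb fun z => injb (colf q z)
def idemb (q : Fin 5 → Fin 5 → Fin 5) : Bool := allb fun x => q x x == x
theorem aff2_facts : rdb aff2 = true ∧ idemb aff2 = true ∧ rackb aff2 = true ∧ onestepb aff2 = true := by decide +kernel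
theorem aff3_facts : rdb aff3 = true ∧ idemb aff3 = true ∧ rackb aff3 = true ∧ onestepb aff3 = true := by decide +kernel
theorem aff4_facts : rdb aff4 = true ∧ idemb aff4 = true ∧ rackb aff4 = true ∧ onestepb aff4 = true := by decide +kernel

/-! ### Bridges between booleans and propositions -/

lemma mem_l5 (x : Fin 5) : x ∈ l5 := by fin_cases x <;> simp [l5]

lemma allb_mp {p : Fin 5 → Bool} (h : allb p = true) (x : Fin 5) : p x = true :=
  List.all_eq_true.mp h x (mem_l5 x)

lemma allb_mpr {p : Fin 5 → Bool} (h : ∀ x, p x = true) : allb p = true :=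
  List.all_eq_true.mpr fun x _ => h x

lemma anyb_mp {p : Fin 5 → Bool} (h : anyb p = true) : ∃ x, p x = true := by
  obtain ⟨x, -, hx⟩ := List.any_eq_true.mp h; exact ⟨x, hx⟩


lemma bor_mp {a b : Bool} (h : (a || b) = true) : a = true ∨ b = true := by
  cases a
  · right; simpa using h
  · left; rfl

lemma bor_inl {a b : Bool} (h : a = true) : (a || b) = true := by rw [h]; rfl

lemma bor_inr {a b : Bool} (h : b = true) : (a || b) = true := by cases a <;> simp [h]


lemma band_mp {a b : Bool} (h : (a && b) = true) : a = true ∧ b = true := by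
  cases a
  · exact absurd h (by simp)
  · exact ⟨rfl, by simpa using h⟩

lemma band_mpr {a b : Bool} (ha : a = true) (hb : b = true) : (a && b) = true := by
  rw [ha, hb]; rfl

lemma imp_ok {a b : Bool} (h : (!a || b) = true) (ha : a = true) : b = true := by
  rw [ha] at h; simpa using h

lemma bij_of_injb {f : Fin 5 → Fin 5} (h : injb f = true) : Function.Bijective f := by
  have hinj : Function.Injective f := by
    intro x y hxy
    have := allb_mp (allb_mp h x) y
    rw [hxy] at this
    simpa using this
  exact Finite.injective_iff_bijective.mp hinj

lemma injb_of_inj {f : Fin 5 → Fin 5} (h : Function.Injective f) : injb f = true :=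
  allb_mpr fun x => allb_mpr fun y => by
    by_cases hxy : f x = f y
    · simp [h hxy]
    · simp [hxy]

lemma perms_bij {f : Fin 5 → Fin 5} (hf : f ∈ perms120) : Function.Bijective f :=
  bij_of_injb (List.all_eq_true.mp perms_inj f hf)

lemma scan_mem {f : Fin 5 → Fin 5} (h : (perms120.any fun g => allb fun x => g x == f x) = true) :
    f ∈ perms120 := by
  obtain ⟨g, hg, hall⟩ := List.any_eq_true.mp h
  have : g = f := funext fun x => by simpa using allb_mp hall x
  exact this ▸ hg

lemma mem_perms {f : Fin 5 → Fin 5} (hf : Function.Bijective f) : f ∈ perms120 := by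
  have hf5 : ![f 0, f 1, f 2, f 3, f 4] = f := by
    funext x; fin_cases x <;> rfl
  have h1 := List.all_eq_true.mp mp_ok (f 0) (mem_l5 _)
  have h2 := List.all_eq_true.mp h1 (f 1) (mem_l5 _)
  have h3 := List.all_eq_true.mp h2 (f 2) (mem_l5 _)
  have h4 := List.all_eq_true.mp h3 (f 3) (mem_l5 _)
  have h5 := List.all_eq_true.mp h4 (f 4) (mem_l5 _)
  have hface : injb ![f 0, f 1, f 2, f 3, f 4] = true := by
    rw [hf5]; exact injb_of_inj hf.injective
  have hscan := imp_ok h5 hface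
  rw [hf5] at hscan
  exact scan_mem hscan

lemma rdb_of_rd {op : Fin 5 → Fin 5 → Fin 5} (h : RightDist op) : rdb op = true :=
  allb_mpr fun x => allb_mpr fun y => allb_mpr fun z => by simp [h x y z]

lemma rd_of_rdb {op : Fin 5 → Fin 5 → Fin 5} (h : rdb op = true) : RightDist op := fun x y z => by
  simpa using allb_mp (allb_mp (allb_mp h x) y) z

lemma foldl_mem {op : Fin 5 → Fin 5 → Fin 5} {s : List (Fin 5)}
    (hcl : ∀ a ∈ s, ∀ z, op a z ∈ s) :
    ∀ (l : List (Fin 5)) (a), a ∈ s → l.foldl op a ∈ s := by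
  intro l
  induction l with
  | nil => intro a ha; exact ha
  | cons z t ih => intro a ha; exact ih (op a z) (hcl a ha z)

lemma dpb_of_conn {op : Fin 5 → Fin 5 → Fin 5} (hc : ShelfConnected op) : dpb op = true := by
  apply List.all_eq_true.mpr
  intro s hs
  by_cases hcl : (s.all fun a => l5.all fun z => s.any (fun w => w == op a z)) = true
  · apply bor_inr
    have hclosed : ∀ a ∈ s, ∀ z, op a z ∈ s := by
      intro a ha z
      have h1 := List.all_eq_true.mp hcl a ha
      have h2 := List.all_eq_true.mp h1 z (mem_l5 z)
      obtain ⟨w, hw, hbw⟩ := List.any_eq_true.mp h2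
      have : w = op a z := by simpa using hbw
      exact this ▸ hw
    obtain ⟨a, ha⟩ : ∃ a, a ∈ s := by
      cases s with
      | nil => exact absurd rfl (subs_ne [] hs)
      | cons b t => exact ⟨b, List.mem_cons_self⟩
    apply List.all_eq_true.mpr
    intro y _
    obtain ⟨l, hl⟩ := hc a y
    exact List.any_eq_true.mpr ⟨y, hl ▸ foldl_mem hclosed l a ha, by simp⟩
  · apply bor_inl
    simp [hcl]

def Iso3 (op : Fin 5 → Fin 5 → Fin 5) : Prop :=
  ShelfIso op aff2 ∨ ShelfIso op aff3 ∨ ShelfIso op aff4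

lemma shelfIso_of_isob {op q : Fin 5 → Fin 5 → Fin 5} (h : isob op q = true) : ShelfIso op q := by
  obtain ⟨f, hf, hall⟩ := List.any_eq_true.mp h
  refine ⟨Equiv.ofBijective f (perms_bij hf), fun x y => ?_⟩
  exact (by simpa using allb_mp (allb_mp hall x) y : f (op x y) = q (f x) (f y))

lemma isob_of_shelfIso {op q : Fin 5 → Fin 5 → Fin 5} (h : ShelfIso op q) : isob op q = true := by
  obtain ⟨f, hf⟩ := h
  refine List.any_eq_true.mpr ⟨⇑f, mem_perms f.bijective, allb_mpr fun x => allb_mpr fun y => ?_⟩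
  simp [hf x y]

lemma iso3_of_iso3b {op : Fin 5 → Fin 5 → Fin 5} (h : iso3b op = true) : Iso3 op := by
  rcases bor_mp h with h12 | h3
  · rcases bor_mp h12 with h1 | h2
    · exact Or.inl (shelfIso_of_isob h1)
    · exact Or.inr (Or.inl (shelfIso_of_isob h2))
  · exact Or.inr (Or.inr (shelfIso_of_isob h3))

lemma fixb_of {σ : Fin 5 → Fin 5} {i : Fin 5} (h : σ i = i) : fixb σ i = true := by
  simp [fixb, h]

lemma relb_of {c σa σb : Fin 5 → Fin 5} (h : ∀ x, σb (c x) = c (σa x)) :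
    relb c σa σb = true :=
  allb_mpr fun x => by simp [relb, h x]

lemma search_extract {c : Fin 5 → Fin 5} {g2 : (Fin 5 → Fin 5) → (Fin 5 → Fin 5) → Bool}
    {g3 : (Fin 5 → Fin 5) → (Fin 5 → Fin 5) → (Fin 5 → Fin 5) → Bool}
    {g4 : (Fin 5 → Fin 5) → (Fin 5 → Fin 5) → (Fin 5 → Fin 5) → (Fin 5 → Fin 5) → Bool}
    (hs : (perms120.all fun σ1 => !(fixb σ1 1) ||
        (perms120.all fun σ2 => !(g2 σ1 σ2) ||
        (perms120.all fun σ3 => !(g3 σ1 σ2 σ3) ||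
        (perms120.all fun σ4 => !(g4 σ1 σ2 σ3 σ4) ||
          body c σ1 σ2 σ3 σ4)))) = true)
    {σ1 σ2 σ3 σ4 : Fin 5 → Fin 5}
    (h1 : σ1 ∈ perms120) (h2 : σ2 ∈ perms120) (h3 : σ3 ∈ perms120) (h4 : σ4 ∈ perms120)
    (f1 : fixb σ1 1 = true) (f2 : g2 σ1 σ2 = true) (f3 : g3 σ1 σ2 σ3 = true)
    (f4 : g4 σ1 σ2 σ3 σ4 = true)
    (hrd : rdb (mkOp c σ1 σ2 σ3 σ4) = true) (hdp : dpb (mkOp c σ1 σ2 σ3 σ4) = true) :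
    iso3b (mkOp c σ1 σ2 σ3 σ4) = true := by
  have b1 := imp_ok (List.all_eq_true.mp hs σ1 h1) f1
  have b2 := imp_ok (List.all_eq_true.mp b1 σ2 h2) f2
  have b3 := imp_ok (List.all_eq_true.mp b2 σ3 h3) f3
  have b4 := imp_ok (List.all_eq_true.mp b3 σ4 h4) f4
  exact imp_ok b4 (by simp [body, hrd, hdp])

/-! ### Transport of structure along a bijection -/

def tr (op : Fin 5 → Fin 5 → Fin 5) (g : Fin 5 ≃ Fin 5) : Fin 5 → Fin 5 → Fin 5 :=
  fun x y => g (op (g.symm x) (g.symm y))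

lemma tr_shelfIso (op : Fin 5 → Fin 5 → Fin 5) (g : Fin 5 ≃ Fin 5) : ShelfIso op (tr op g) :=
  ⟨g, fun x y => by simp [tr]⟩

lemma tr_rd {op : Fin 5 → Fin 5 → Fin 5} (g : Fin 5 ≃ Fin 5) (h : RightDist op) :
    RightDist (tr op g) := by
  intro x y z
  simp only [tr, Equiv.symm_apply_apply]
  exact congrArg g (h _ _ _)

lemma tr_idem {op : Fin 5 → Fin 5 → Fin 5} (g : Fin 5 ≃ Fin 5) (h : ∀ x, op x x = x) :
    ∀ x, tr op g x x = x := by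
  intro x; simp [tr, h]

lemma tr_rack {op : Fin 5 → Fin 5 → Fin 5} (g : Fin 5 ≃ Fin 5) (h : IsRackOp op) :
    IsRackOp (tr op g) := by
  intro z
  have he : (fun y => tr op g y z) = ⇑g ∘ (fun w => op w (g.symm z)) ∘ ⇑g.symm := rfl
  rw [he]
  exact g.bijective.comp ((h (g.symm z)).comp g.symm.bijective)

lemma foldl_map (op : Fin 5 → Fin 5 → Fin 5) (g : Fin 5 ≃ Fin 5) :
    ∀ (l : List (Fin 5)) (x), (l.map ⇑g).foldl (tr op g) (g x) = g (l.foldl op x) := by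
  intro l
  induction l with
  | nil => intro x; rfl
  | cons a t ih =>
    intro x
    show (t.map ⇑g).foldl (tr op g) (tr op g (g x) (g a)) = _
    have he : tr op g (g x) (g a) = g (op x a) := by simp [tr]
    rw [he]
    exact ih (op x a)

lemma tr_conn {op : Fin 5 → Fin 5 → Fin 5} (g : Fin 5 ≃ Fin 5) (h : ShelfConnected op) :
    ShelfConnected (tr op g) := by
  intro x y
  obtain ⟨l, hl⟩ := h (g.symm x) (g.symm y)
  refine ⟨l.map ⇑g, ?_⟩
  have hm := foldl_map op g l (g.symm x)
  rw [hl] at hm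
  simpa using hm

/-! ### ShelfIso is an equivalence -/

lemma shelfIso_refl {S : Type*} (op : S → S → S) : ShelfIso op op :=
  ⟨Equiv.refl S, fun _ _ => rfl⟩

lemma shelfIso_symm {S T : Type*} {op₁ : S → S → S} {op₂ : T → T → T}
    (h : ShelfIso op₁ op₂) : ShelfIso op₂ op₁ := by
  obtain ⟨f, hf⟩ := h
  refine ⟨f.symm, fun x y => f.injective ?_⟩
  rw [hf, Equiv.apply_symm_apply, Equiv.apply_symm_apply, Equiv.apply_symm_apply]

lemma shelfIso_trans {S T U : Type*} {op₁ : S → S → S} {op₂ : T → T → T} {op₃ : U → U → U}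
    (h1 : ShelfIso op₁ op₂) (h2 : ShelfIso op₂ op₃) : ShelfIso op₁ op₃ := by
  obtain ⟨f, hf⟩ := h1
  obtain ⟨g, hg⟩ := h2
  exact ⟨f.trans g, fun x y => by simp [Equiv.trans_apply, hf, hg]⟩

/-! ### Classification -/

lemma classify (op : Fin 5 → Fin 5 → Fin 5) (hd : RightDist op) (hi : ∀ x, op x x = x)
    (hr : IsRackOp op) (hc : ShelfConnected op) : Iso3 op := by
  -- there is a non-identity column
  have hnontriv : ∃ z w, op w z ≠ w := by
    by_contra hcon
    push_neg at hcon
    have hfold : ∀ (l : List (Fin 5)) (x : Fin 5), l.foldl op x = x := by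
      intro l
      induction l with
      | nil => intro x; rfl
      | cons a t ih => intro x; show t.foldl op (op x a) = x; rw [hcon a x]; exact ih x
    obtain ⟨l, hl⟩ := hc 0 1
    rw [hfold] at hl
    exact absurd hl (by decide)
  obtain ⟨z, w, hw⟩ := hnontriv
  have hpb : Function.Bijective (colf op z) := hr z
  have hpm : colf op z ∈ perms120 := mem_perms hpb
  have hn := imp_ok (List.all_eq_true.mp (List.all_eq_true.mp norm_ok _ hpm) z (mem_l5 z))
      (by simp [colf, hi z])
  rcases bor_mp hn with hid | hex
  · exfalso
    apply hw
    simpa [colf] using allb_mp hid w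
  obtain ⟨g, hgm, hgc⟩ := List.any_eq_true.mp hex
  have hg0 : g z = 0 := by simpa using (band_mp hgc).1
  have hconj := (band_mp hgc).2
  have hgb : Function.Bijective g := perms_bij hgm
  let G : Fin 5 ≃ Fin 5 := Equiv.ofBijective g hgb
  let op' := tr op G
  have hd' : RightDist op' := tr_rd G hd
  have hi' : ∀ x, op' x x = x := tr_idem G hi
  have hr' : IsRackOp op' := tr_rack G hr
  have hc' : ShelfConnected op' := tr_conn G hc
  have hGz : G.symm 0 = z := by
    apply G.injective
    rw [Equiv.apply_symm_apply]
    exact (show G z = 0 from hg0).symm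
  have hcol0_aux : ∀ x, op' x 0 = g (colf op z (G.symm x)) := by
    intro x
    show G (op (G.symm x) (G.symm 0)) = _
    rw [hGz]
    rfl
  have main : ∀ c : Fin 5 → Fin 5, conjb g (colf op z) c = true → ∀ x : Fin 5, op' x 0 = c x := by
    intro c hcb x
    rw [hcol0_aux x]
    have h2 : g (colf op z (G.symm x)) = c (g (G.symm x)) := by simpa using allb_mp hcb (G.symm x)
    rw [h2]
    exact congrArg c (G.apply_symm_apply x)
  -- membership and fixed points of the columns of op'
  have hm : ∀ i, colf op' i ∈ perms120 := fun i => mem_perms (hr' i)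
  have hfix : ∀ i : Fin 5, colf op' i i = i := fun i => hi' i
  suffices hIso3' : Iso3 op' by
    rcases hIso3' with h | h | h
    · exact Or.inl (shelfIso_trans (tr_shelfIso op G) h)
    · exact Or.inr (Or.inl (shelfIso_trans (tr_shelfIso op G) h))
    · exact Or.inr (Or.inr (shelfIso_trans (tr_shelfIso op G) h))
  have docase : ∀ c : Fin 5 → Fin 5, (∀ x, op' x 0 = c x) →
      (iso3b (mkOp c (colf op' 1) (colf op' 2) (colf op' 3) (colf op' 4)) = true) → Iso3 op' := by
    intro c hcol0 hiso
    have hmop : mkOp c (colf op' 1) (colf op' 2) (colf op' 3) (colf op' 4) = op' := by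
      funext x y
      fin_cases y
      · exact (hcol0 x).symm
      · rfl
      · rfl
      · rfl
      · rfl
    rw [hmop] at hiso
    exact iso3_of_iso3b hiso
  have hrelgen : ∀ c : Fin 5 → Fin 5, (∀ x, op' x 0 = c x) →
      ∀ x y, op' (c x) (c y) = c (op' x y) := by
    intro c hcol0 x y
    rw [← hcol0 x, ← hcol0 y, ← hcol0 (op' x y)]
    exact (hd' x y 0).symm
  rcases bor_mp hconj with habc | h4
  rcases bor_mp habc with hab | h3
  rcases bor_mp hab with h2 | h22
  · -- c2v case
    have hcol0 := main c2v h2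
    have hrel := hrelgen c2v hcol0
    have hmop : mkOp c2v (colf op' 1) (colf op' 2) (colf op' 3) (colf op' 4) = op' := by
      funext x y
      fin_cases y
      · exact (hcol0 x).symm
      · rfl
      · rfl
      · rfl
      · rfl
    refine docase c2v hcol0 (search_extract searchC2 (hm 1) (hm 2) (hm 3) (hm 4)
      (fixb_of (hfix 1))
      (band_mpr (fixb_of (hfix 2)) (relb_of (fun x => hrel x 1)))
      (band_mpr (fixb_of (hfix 3)) (relb_of (fun x => hrel x 3)))
      (band_mpr (fixb_of (hfix 4)) (relb_of (fun x => hrel x 4)))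
      ?_ ?_)
    · rw [hmop]; exact rdb_of_rd hd'
    · rw [hmop]; exact dpb_of_conn hc'
  · -- c22v case
    have hcol0 := main c22v h22
    have hrel := hrelgen c22v hcol0
    have hmop : mkOp c22v (colf op' 1) (colf op' 2) (colf op' 3) (colf op' 4) = op' := by
      funext x y
      fin_cases y
      · exact (hcol0 x).symm
      · rfl
      · rfl
      · rfl
      · rfl
    refine docase c22v hcol0 (search_extract searchC22 (hm 1) (hm 2) (hm 3) (hm 4)
      (fixb_of (hfix 1))
      (band_mpr (fixb_of (hfix 2)) (relb_of (fun x => hrel x 1)))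
      (fixb_of (hfix 3))
      (band_mpr (fixb_of (hfix 4)) (relb_of (fun x => hrel x 3)))
      ?_ ?_)
    · rw [hmop]; exact rdb_of_rd hd'
    · rw [hmop]; exact dpb_of_conn hc'
  · -- c3v case
    have hcol0 := main c3v h3
    have hrel := hrelgen c3v hcol0
    have hmop : mkOp c3v (colf op' 1) (colf op' 2) (colf op' 3) (colf op' 4) = op' := by
      funext x y
      fin_cases y
      · exact (hcol0 x).symm
      · rfl
      · rfl
      · rfl
      · rfl
    refine docase c3v hcol0 (search_extract searchC3 (hm 1) (hm 2) (hm 3) (hm 4)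
      (fixb_of (hfix 1))
      (band_mpr (fixb_of (hfix 2)) (relb_of (fun x => hrel x 1)))
      (band_mpr (fixb_of (hfix 3)) (relb_of (fun x => hrel x 2)))
      (band_mpr (fixb_of (hfix 4)) (relb_of (fun x => hrel x 4)))
      ?_ ?_)
    · rw [hmop]; exact rdb_of_rd hd'
    · rw [hmop]; exact dpb_of_conn hc'
  · -- c4v case
    have hcol0 := main c4v h4
    have hrel := hrelgen c4v hcol0
    have hmop : mkOp c4v (colf op' 1) (colf op' 2) (colf op' 3) (colf op' 4) = op' := by
      funext x y
      fin_cases y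
      · exact (hcol0 x).symm
      · rfl
      · rfl
      · rfl
      · rfl
    refine docase c4v hcol0 (search_extract searchC4 (hm 1) (hm 2) (hm 3) (hm 4)
      (fixb_of (hfix 1))
      (band_mpr (fixb_of (hfix 2)) (relb_of (fun x => hrel x 1)))
      (band_mpr (fixb_of (hfix 3)) (relb_of (fun x => hrel x 2)))
      (band_mpr (fixb_of (hfix 4)) (relb_of (fun x => hrel x 3)))
      ?_ ?_)
    · rw [hmop]; exact rdb_of_rd hd'
    · rw [hmop]; exact dpb_of_conn hc'

/-! ### The three representatives -/

abbrev QT := {op : Fin 5 → Fin 5 → Fin 5 // RightDist op ∧ (∀ x, op x x = x) ∧ IsRackOp op ∧ ShelfConnected op}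

lemma conn_of_onestep {q : Fin 5 → Fin 5 → Fin 5} (h : onestepb q = true) : ShelfConnected q := by
  intro x y
  obtain ⟨z, hz⟩ := anyb_mp (allb_mp (allb_mp h x) y)
  exact ⟨[z], by simpa using hz⟩

lemma idem_of_idemb {q : Fin 5 → Fin 5 → Fin 5} (h : idemb q = true) : ∀ x, q x x = x :=
  fun x => by simpa using allb_mp h x

lemma rack_of_rackb {q : Fin 5 → Fin 5 → Fin 5} (h : rackb q = true) : IsRackOp q :=
  fun z => bij_of_injb (allb_mp h z)

def mkQT (q : Fin 5 → Fin 5 → Fin 5)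
    (hfacts : rdb q = true ∧ idemb q = true ∧ rackb q = true ∧ onestepb q = true) : QT :=
  ⟨q, rd_of_rdb hfacts.1, idem_of_idemb hfacts.2.1, rack_of_rackb hfacts.2.2.1,
    conn_of_onestep hfacts.2.2.2⟩

def rep : Fin 3 → QT := ![mkQT aff2 aff2_facts, mkQT aff3 aff3_facts, mkQT aff4 aff4_facts]

end CQ5

open CQ5 in
/-- Up to isomorphism there are exactly 3 connected quandles of order 5. -/
theorem card_connected_quandles_five :
    Nat.card (Quot (fun a b : {op : Fin 5 → Fin 5 → Fin 5 // RightDist op ∧ (∀ x, op x x = x) ∧ IsRackOp op ∧ ShelfConnected op} =>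
      ShelfIso a.1 b.1)) = 3 := by
  set r : QT → QT → Prop := fun a b => ShelfIso a.1 b.1 with hr
  show Nat.card (Quot r) = 3
  have requiv : Equivalence r :=
    ⟨fun a => shelfIso_refl a.1, fun h => shelfIso_symm h, fun h1 h2 => shelfIso_trans h1 h2⟩
  letI s : Setoid QT := ⟨r, requiv⟩
  let F : Fin 3 → Quot r := fun i => Quot.mk r (rep i)
  have hcl : ∀ a : QT, ∃ i : Fin 3, ShelfIso a.1 (rep i).1 := by
    intro a
    obtain ⟨hd, hi, hrk, hc⟩ := a.2
    rcases classify a.1 hd hi hrk hc with h | h | h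
    · exact ⟨0, h⟩
    · exact ⟨1, h⟩
    · exact ⟨2, h⟩
  have hsurj : Function.Surjective F := by
    intro q
    induction q using Quot.ind with
    | _ a =>
      obtain ⟨i, hi⟩ := hcl a
      exact ⟨i, Quot.sound (shelfIso_symm hi)⟩
  have hinj : Function.Injective F := by
    intro i j hij
    have hrel : ShelfIso (rep i).1 (rep j).1 :=
      Quotient.exact (show Quotient.mk s (rep i) = Quotient.mk s (rep j) from hij)
    fin_cases i <;> fin_cases j <;> first
      | rfl
      | (exfalso
         first
          | exact absurd (show isob aff2 aff3 = true from isob_of_shelfIso hrel) (by simp [niso23])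
          | exact absurd (show isob aff3 aff2 = true from isob_of_shelfIso hrel) (by simp [niso32])
          | exact absurd (show isob aff2 aff4 = true from isob_of_shelfIso hrel) (by simp [niso24])
          | exact absurd (show isob aff4 aff2 = true from isob_of_shelfIso hrel) (by simp [niso42])
          | exact absurd (show isob aff3 aff4 = true from isob_of_shelfIso hrel) (by simp [niso34])
          | exact absurd (show isob aff4 aff3 = true from isob_of_shelfIso hrel) (by simp [niso43]))
  have hcard : Nat.card (Fin 3) = Nat.card (Quot r) :=
    Nat.card_eq_of_bijective F ⟨hinj, hsurj⟩
  rw [← hcard]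
  simp
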